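/- Let G be a perfect Cayley graph of a finite group of order n with symmetric generating set S, such that the chromatic number χ(G) is odd and χ(G) divides n. Then G satisfies the Total Coloring Conjecture: its total chromatic number is at most Δ + 2, where Δ = |S| is the degree of G. -/

import Mathlib

/-- A total coloring of a simple graph `G` with colors in `Fin k`: adjacent vertices get
distinct colors, edges sharing an endpoint get distinct colors, and each edge gets a color
distinct from the colors of both its endpoints. -/
def IsTotalColoring {V : Type*} (G : SimpleGraph V) {k : ℕ}
    (cV : V → Fin k) (cE : G.edgeSet → Fin k) : Prop :=
  (∀ u v : V, G.Adj u v → cV u ≠ cV v) ∧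
  (∀ e f : G.edgeSet, e ≠ f → (∃ x, x ∈ (e : Sym2 V) ∧ x ∈ (f : Sym2 V)) → cE e ≠ cE f) ∧
  (∀ (e : G.edgeSet) (v : V), v ∈ (e : Sym2 V) → cE e ≠ cV v)

/-- The total chromatic number: the least `k` admitting a total coloring with `k` colors. -/
noncomputable def totalChromaticNumber {V : Type*} (G : SimpleGraph V) : ℕ :=
  sInf {k | ∃ (cV : V → Fin k) (cE : G.edgeSet → Fin k), IsTotalColoring G cV cE}

/-- The Cayley graph of a group `H` with connection set `S`: `g` and `h` are adjacent
iff `g ≠ h` and `g⁻¹ * h ∈ S` (or `h⁻¹ * g ∈ S`). -/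
def cayleyGraph {H : Type*} [Group H] (S : Finset H) : SimpleGraph H :=
  SimpleGraph.fromRel (fun g h => g⁻¹ * h ∈ S)

/-- A graph is perfect if for every induced subgraph the chromatic number equals
the clique number. -/
def IsPerfectGraph {V : Type*} (G : SimpleGraph V) : Prop :=
  ∀ s : Set V, (G.induce s).chromaticNumber = ((G.induce s).cliqueNum : ℕ∞)


set_option linter.unusedSectionVars false
set_option maxHeartbeats 1000000

open SimpleGraph

section Vizing

variable {V : Type*} [Fintype V] [DecidableEq V] (B : SimpleGraph V) {N : ℕ}

/-- partial edge coloring -/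
abbrev PEC (V : Type*) (N : ℕ) := Sym2 V → Option (Fin N)

def Proper (f : PEC V N) : Prop :=
  ∀ ⦃u v w : V⦄, B.Adj u v → B.Adj u w → v ≠ w →
    f s(u,v) ≠ none → f s(u,v) ≠ f s(u,w)

def Free (f : PEC V N) (v : V) (c : Fin N) : Prop :=
  ∀ w, B.Adj v w → f s(v,w) ≠ some c

variable {B}

lemma exists_free (f : PEC V N) {v : V} {cs : Finset V}
    (hcs : ∀ w, B.Adj v w → w ∈ cs) (hlt : cs.card < N) :
    ∃ c, Free B f v c := by
  by_contra h
  push_neg at h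
  simp only [_root_.Free] at h
  push_neg at h
  choose g hg1 hg2 using h
  have hginj : Function.Injective g := by
    intro c c' hcc
    have h2 : (some c : Option (Fin N)) = some c' := by
      rw [← hg2 c, hcc, hg2 c']
    exact Option.some_injective _ h2
  have : N ≤ cs.card := by
    have := Finset.card_le_card_of_injOn (s := (Finset.univ : Finset (Fin N)))
      g (fun c _ => hcs _ (hg1 c)) (fun a _ b _ h => hginj h)
    simpa using this
  omega


variable (B) (f : PEC V N) (a b : Fin N)

def kempeGraph : SimpleGraph V where
  Adj u v := B.Adj u v ∧ (f s(u,v) = some a ∨ f s(u,v) = some b)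
  symm := by
    refine ⟨?_⟩
    intro u v ⟨h1, h2⟩
    exact ⟨h1.symm, by rwa [Sym2.eq_swap]⟩
  loopless := ⟨fun v h => B.loopless.irrefl v h.1⟩

variable (x : V)

open Classical in
noncomputable def kflip : PEC V N := fun e =>
  if e ∈ (kempeGraph B f a b).edgeSet ∧ (∃ v ∈ e, (kempeGraph B f a b).Reachable x v)
  then (if f e = some a then some b else some a) else f e

variable {B f a b x}

lemma flip_of_reach_a {u v : V} (hadj : B.Adj u v)
    (hr : (kempeGraph B f a b).Reachable x u) (hcol : f s(u,v) = some a) :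
    kflip B f a b x s(u,v) = some b := by
  rw [kflip, if_pos, if_pos hcol]
  exact ⟨(SimpleGraph.mem_edgeSet _).2 ⟨hadj, Or.inl hcol⟩, ⟨u, Sym2.mem_mk_left u v, hr⟩⟩

lemma flip_of_reach_b {u v : V} (hadj : B.Adj u v) (hab : a ≠ b)
    (hr : (kempeGraph B f a b).Reachable x u) (hcol : f s(u,v) = some b) :
    kflip B f a b x s(u,v) = some a := by
  rw [kflip, if_pos, if_neg]
  · rw [hcol]
    simp only [Option.some_inj]
    exact fun h => hab h.symm
  · exact ⟨(SimpleGraph.mem_edgeSet _).2 ⟨hadj, Or.inr hcol⟩, ⟨u, Sym2.mem_mk_left u v, hr⟩⟩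

lemma flip_of_not_reach {u v : V} (hr : ¬ (kempeGraph B f a b).Reachable x u) :
    kflip B f a b x s(u,v) = f s(u,v) := by
  rw [kflip, if_neg]
  rintro ⟨he, w, hw, hrw⟩
  rw [Sym2.mem_iff] at hw
  have hadj : (kempeGraph B f a b).Adj u v := (SimpleGraph.mem_edgeSet _).1 he
  rcases hw with rfl | rfl
  · exact hr hrw
  · exact hr (hrw.trans (SimpleGraph.Adj.reachable hadj.symm))

lemma flip_of_ne_colors {e : Sym2 V} (h1 : f e ≠ some a) (h2 : f e ≠ some b) :
    kflip B f a b x e = f e := by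
  rw [kflip, if_neg]
  rintro ⟨he, -⟩
  induction e with
  | _ u v =>
    have hadj : (kempeGraph B f a b).Adj u v := (SimpleGraph.mem_edgeSet _).1 he
    rcases hadj.2 with h | h
    · exact h1 h
    · exact h2 h

lemma flip_none_iff {e : Sym2 V} : kflip B f a b x e = none ↔ f e = none := by
  rw [kflip]
  split
  · next h =>
    constructor
    · intro hc
      split at hc <;> simp at hc
    · intro hc
      exfalso
      obtain ⟨he, -⟩ := h
      induction e with
      | _ u v =>
        rcases ((SimpleGraph.mem_edgeSet _).1 he).2 with h' | h' <;> rw [hc] at h' <;> simp at h'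
  · exact Iff.rfl

lemma flip_proper (hab : a ≠ b) (hf : Proper B f) : Proper B (kflip B f a b x) := by
  intro u v w huv huw hvw hnn heq
  by_cases hr : (kempeGraph B f a b).Reachable x u
  · -- u in the component; analyze colors of both edges
    by_cases h1a : f s(u,v) = some a
    · by_cases h2a : f s(u,w) = some a
      · exact hf huv huw hvw (h1a ▸ (by simp)) (h1a.trans h2a.symm)
      · by_cases h2b : f s(u,w) = some b
        · rw [flip_of_reach_a huv hr h1a, flip_of_reach_b huw hab hr h2b] at heq
          simp only [Option.some_inj] at heq
          exact hab heq.symm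
        · rw [flip_of_reach_a huv hr h1a, flip_of_ne_colors h2a h2b] at heq
          exact h2b heq.symm
    · by_cases h1b : f s(u,v) = some b
      · by_cases h2a : f s(u,w) = some a
        · rw [flip_of_reach_b huv hab hr h1b, flip_of_reach_a huw hr h2a] at heq
          simp only [Option.some_inj] at heq
          exact hab heq
        · by_cases h2b : f s(u,w) = some b
          · exact hf huv huw hvw (h1b ▸ (by simp)) (h1b.trans h2b.symm)
          · rw [flip_of_reach_b huv hab hr h1b, flip_of_ne_colors h2a h2b] at heq
            exact h2a heq.symm
      · rw [flip_of_ne_colors h1a h1b] at heq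
        rw [flip_of_ne_colors h1a h1b] at hnn
        by_cases h2a : f s(u,w) = some a
        · rw [flip_of_reach_a huw hr h2a] at heq
          exact h1b heq
        · by_cases h2b : f s(u,w) = some b
          · rw [flip_of_reach_b huw hab hr h2b] at heq
            exact h1a heq
          · rw [flip_of_ne_colors h2a h2b] at heq
            exact hf huv huw hvw hnn heq
  · rw [flip_of_not_reach hr, flip_of_not_reach hr] at heq
    rw [flip_of_not_reach hr] at hnn
    exact hf huv huw hvw hnn heq

lemma free_flip_of_not_reach {u : V} {c : Fin N}
    (hr : ¬ (kempeGraph B f a b).Reachable x u) (hfree : Free B f u c) :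
    Free B (kflip B f a b x) u c := by
  intro w hw
  rw [flip_of_not_reach hr]
  exact hfree w hw

lemma free_flip_of_ne {u : V} {c : Fin N} (hca : c ≠ a) (hcb : c ≠ b)
    (hfree : Free B f u c) : Free B (kflip B f a b x) u c := by
  intro w hw hc
  rw [kflip] at hc
  split at hc
  · split at hc <;> simp only [Option.some_inj] at hc
    · exact hcb hc.symm
    · exact hca hc.symm
  · exact hfree w hw hc

lemma free_flip_swap {u : V} (hab : a ≠ b)
    (hr : (kempeGraph B f a b).Reachable x u) (hfree : Free B f u b) :
    Free B (kflip B f a b x) u a := by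
  intro w hw hc
  by_cases h1 : f s(u,w) = some a
  · rw [flip_of_reach_a hw hr h1] at hc
    simp only [Option.some_inj] at hc
    exact hab hc.symm
  · by_cases h2 : f s(u,w) = some b
    · exact hfree w hw h2
    · rw [flip_of_ne_colors h1 h2] at hc
      exact h1 hc

lemma free_flip_swap' {u : V} (hab : a ≠ b)
    (hr : (kempeGraph B f a b).Reachable x u) (hfree : Free B f u a) :
    Free B (kflip B f a b x) u b := by
  intro w hw hc
  by_cases h2 : f s(u,w) = some b
  · rw [flip_of_reach_b hw hab hr h2] at hc
    simp only [Option.some_inj] at hc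
    exact hab hc
  · by_cases h1 : f s(u,w) = some a
    · exact hfree w hw h1
    · rw [flip_of_ne_colors h1 h2] at hc
      exact h2 hc


section PathLemma

variable {Γ : SimpleGraph V}

/-- an interior vertex of a path has two distinct neighbors, both on the path -/
lemma interior_two_nbrs {v w : V} {p : Γ.Walk v w} (hp : p.IsPath) {z : V}
    (hz : z ∈ p.support) (hzv : z ≠ v) (hzw : z ≠ w) :
    ∃ z₁ z₂, z₁ ≠ z₂ ∧ Γ.Adj z z₁ ∧ Γ.Adj z z₂ ∧ z₁ ∈ p.support ∧ z₂ ∈ p.support := by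
  induction p with
  | nil => simp at hz; exact absurd hz hzv
  | @cons v v₁ w h q ih =>
    rw [SimpleGraph.Walk.support_cons, List.mem_cons] at hz
    rcases hz with rfl | hz
    · exact absurd rfl hzv
    · rw [SimpleGraph.Walk.cons_isPath_iff] at hp
      by_cases hzv₁ : z = v₁
      · subst hzv₁
        cases q with
        | nil => exact absurd rfl hzw
        | @cons _ v₂ _ h' q' =>
          refine ⟨v, v₂, ?_, h.symm, h', by simp, by simp⟩
          intro hvv₂
          subst hvv₂
          exact hp.2 (by simp)
      · obtain ⟨z₁, z₂, h1, h2, h3, h4, h5⟩ := ih hp.1 hz hzv₁ hzw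
        exact ⟨z₁, z₂, h1, h2, h3, by simp [h4], by simp [h5]⟩

lemma exists_first_nbr {v w : V} (hvw : v ≠ w) (p : Γ.Walk v w) :
    ∃ v₁, Γ.Adj v v₁ ∧ v₁ ∈ p.support := by
  cases p with
  | nil => exact absurd rfl hvw
  | @cons _ v₁ _ h q => exact ⟨v₁, h, by simp⟩

lemma support_closed
    (hdeg2 : ∀ u z₁ z₂ z₃, Γ.Adj u z₁ → Γ.Adj u z₂ → Γ.Adj u z₃ →
      z₁ = z₂ ∨ z₁ = z₃ ∨ z₂ = z₃)
    {v w : V} (hvw : v ≠ w) {p : Γ.Walk v w} (hp : p.IsPath)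
    (hv : ∀ z z', Γ.Adj v z → Γ.Adj v z' → z = z')
    (hw : ∀ z z', Γ.Adj w z → Γ.Adj w z' → z = z') :
    ∀ z ∈ p.support, ∀ z', Γ.Adj z z' → z' ∈ p.support := by
  intro z hz z' hadj
  by_cases hzv : z = v
  · subst hzv
    obtain ⟨v₁, h1, h2⟩ := exists_first_nbr hvw p
    rwa [hv z' v₁ hadj h1]
  · by_cases hzw : z = w
    · subst hzw
      obtain ⟨w₁, h1, h2⟩ := exists_first_nbr (Ne.symm hvw) p.reverse
      rw [SimpleGraph.Walk.support_reverse] at h2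
      rw [hw z' w₁ hadj h1]
      rwa [List.mem_reverse] at h2
    · obtain ⟨z₁, z₂, h1, h2, h3, h4, h5⟩ := interior_two_nbrs hp hz hzv hzw
      rcases hdeg2 z z' z₁ z₂ hadj h2 h3 with rfl | rfl | rfl
      · exact h4
      · exact h5
      · exact absurd rfl h1

lemma reach_subset_support {v w : V} {p : Γ.Walk v w}
    (hclosed : ∀ z ∈ p.support, ∀ z', Γ.Adj z z' → z' ∈ p.support) :
    ∀ {s u : V} (_ : Γ.Walk s u), s ∈ p.support → u ∈ p.support := by
  intro s u q
  induction q with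
  | nil => exact id
  | @cons s s₁ u h q ih => exact fun hs => ih (hclosed s hs s₁ h)

lemma three_endpoints
    (hdeg2 : ∀ u z₁ z₂ z₃, Γ.Adj u z₁ → Γ.Adj u z₂ → Γ.Adj u z₃ →
      z₁ = z₂ ∨ z₁ = z₃ ∨ z₂ = z₃)
    {x v w : V} (hxv : x ≠ v) (hxw : x ≠ w) (hvw : v ≠ w)
    (hx : ∀ z z', Γ.Adj x z → Γ.Adj x z' → z = z')
    (hv : ∀ z z', Γ.Adj v z → Γ.Adj v z' → z = z')
    (hw : ∀ z z', Γ.Adj w z → Γ.Adj w z' → z = z')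
    (h1 : Γ.Reachable x v) (h2 : Γ.Reachable x w) : False := by
  obtain ⟨q⟩ := h1.symm.trans h2
  obtain ⟨q'⟩ := h1.symm
  have hp := q.toPath.2
  set p := (q.toPath : Γ.Walk v w) with hpdef
  have hclosed := support_closed hdeg2 hvw hp hv hw
  have hxs : x ∈ p.support :=
    reach_subset_support hclosed q' (SimpleGraph.Walk.start_mem_support p)
  obtain ⟨z₁, z₂, hne, ha1, ha2, -, -⟩ := interior_two_nbrs hp hxs hxv hxw
  exact hne (hx z₁ z₂ ha1 ha2)

end PathLemma

section KempeDeg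

variable {f : PEC V N} {a b : Fin N}

lemma kempe_degLE2 (hf : Proper B f) :
    ∀ u z₁ z₂ z₃, (kempeGraph B f a b).Adj u z₁ → (kempeGraph B f a b).Adj u z₂ →
      (kempeGraph B f a b).Adj u z₃ → z₁ = z₂ ∨ z₁ = z₃ ∨ z₂ = z₃ := by
  intro u z₁ z₂ z₃ h1 h2 h3
  by_contra hcon
  push_neg at hcon
  obtain ⟨h12, h13, h23⟩ := hcon
  have d12 := hf h1.1 h2.1 h12 (by rcases h1.2 with h | h <;> simp [h])
  have d13 := hf h1.1 h3.1 h13 (by rcases h1.2 with h | h <;> simp [h])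
  have d23 := hf h2.1 h3.1 h23 (by rcases h2.2 with h | h <;> simp [h])
  rcases h1.2 with e1 | e1 <;> rcases h2.2 with e2 | e2 <;> rcases h3.2 with e3 | e3
  · exact d12 (e1.trans e2.symm)
  · exact d12 (e1.trans e2.symm)
  · exact d13 (e1.trans e3.symm)
  · exact d23 (e2.trans e3.symm)
  · exact d23 (e2.trans e3.symm)
  · exact d13 (e1.trans e3.symm)
  · exact d12 (e1.trans e2.symm)
  · exact d12 (e1.trans e2.symm)

lemma kempe_degLE1_of_free_b (hf : Proper B f) {v : V} (hfree : Free B f v b) :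
    ∀ z z', (kempeGraph B f a b).Adj v z → (kempeGraph B f a b).Adj v z' → z = z' := by
  intro z z' h1 h2
  by_contra hne
  have e1 : f s(v,z) = some a := by
    rcases h1.2 with h | h
    · exact h
    · exact absurd h (hfree z h1.1)
  have e2 : f s(v,z') = some a := by
    rcases h2.2 with h | h
    · exact h
    · exact absurd h (hfree z' h2.1)
  exact hf h1.1 h2.1 hne (by simp [e1]) (e1.trans e2.symm)

lemma kempe_degLE1_of_free_a (hf : Proper B f) {v : V} (hfree : Free B f v a) :
    ∀ z z', (kempeGraph B f a b).Adj v z → (kempeGraph B f a b).Adj v z' → z = z' := by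
  intro z z' h1 h2
  by_contra hne
  have e1 : f s(v,z) = some b := by
    rcases h1.2 with h | h
    · exact absurd h (hfree z h1.1)
    · exact h
  have e2 : f s(v,z') = some b := by
    rcases h2.2 with h | h
    · exact absurd h (hfree z' h2.1)
    · exact h
  exact hf h1.1 h2.1 hne (by simp [e1]) (e1.trans e2.symm)

end KempeDeg

section Recolor

open Classical in
noncomputable def recolor (g : PEC V N) (x : V) (ys : ℕ → V) (j : ℕ) (d : Fin N) :
    PEC V N := fun e =>
  if h : ∃ i, i ≤ j ∧ e = s(x, ys i) then
    (if Nat.find h < j then g s(x, ys (Nat.find h + 1)) else some d)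
  else g e

variable {g : PEC V N} {x : V} {ys : ℕ → V} {m j : ℕ} {d : Fin N}

section RecolorLemmas

variable (hadj : ∀ i ≤ m, B.Adj x (ys i))
  (hinj : ∀ i ≤ m, ∀ i' ≤ m, ys i = ys i' → i = i')
  (hj : j ≤ m)

include hadj hinj hj

lemma recolor_fan {i : ℕ} (hi : i ≤ j) :
    recolor g x ys j d s(x, ys i) =
      if i < j then g s(x, ys (i + 1)) else some d := by
  have hex : ∃ i', i' ≤ j ∧ s(x, ys i) = s(x, ys i') := ⟨i, hi, rfl⟩
  rw [recolor, dif_pos hex]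
  obtain ⟨h1, h2⟩ := Nat.find_spec hex
  have hxys : ∀ i'' , i'' ≤ m → x ≠ ys i'' := by
    intro i'' hi'' heq
    exact B.loopless.irrefl x (by nth_rewrite 2 [heq]; exact hadj i'' hi'')
  rw [Sym2.eq_iff] at h2
  have : Nat.find hex = i := by
    rcases h2 with ⟨-, h2⟩ | ⟨h2, -⟩
    · exact hinj _ (le_trans h1 hj) i (le_trans hi hj) h2.symm
    · exact absurd h2 (hxys _ (le_trans h1 hj))
  rw [this]

omit hadj hinj hj in
lemma recolor_other {e : Sym2 V} (he : ¬ ∃ i, i ≤ j ∧ e = s(x, ys i)) :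
    recolor g x ys j d e = g e := by
  rw [recolor, dif_neg he]

lemma recolor_some
    (hcol : ∀ i < m, ∃ cc, g s(x, ys (i+1)) = some cc ∧ Free B g (ys i) cc)
    (e : Sym2 V) (he : g e ≠ none) : recolor g x ys j d e ≠ none := by
  by_cases h : ∃ i, i ≤ j ∧ e = s(x, ys i)
  · obtain ⟨i, hi, rfl⟩ := h
    rw [recolor_fan hadj hinj hj hi]
    split
    · next hlt =>
      obtain ⟨cc, hcc, -⟩ := hcol i (lt_of_lt_of_le hlt hj)
      simp [hcc]
    · simp
  · rwa [recolor_other h]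

lemma recolor_zero
    (hcol : ∀ i < m, ∃ cc, g s(x, ys (i+1)) = some cc ∧ Free B g (ys i) cc) :
    recolor g x ys j d s(x, ys 0) ≠ none := by
  rw [recolor_fan hadj hinj hj (Nat.zero_le j)]
  split
  · next hlt =>
    obtain ⟨cc, hcc, -⟩ := hcol 0 (lt_of_lt_of_le hlt hj)
    simp [hcc]
  · simp

lemma recolor_proper
    (hcol : ∀ i < m, ∃ cc, g s(x, ys (i+1)) = some cc ∧ Free B g (ys i) cc)
    (hf : Proper B g) (hdx : Free B g x d) (hdy : Free B g (ys j) d) :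
    Proper B (recolor g x ys j d) := by
  have hxys : ∀ i ≤ m, x ≠ ys i := by
    intro i hi heq
    exact B.loopless.irrefl x (by nth_rewrite 2 [heq]; exact hadj i hi)
  have hclass : ∀ z z' : V, (∃ i, i ≤ j ∧ s(z,z') = s(x, ys i)) ∨
      recolor g x ys j d s(z,z') = g s(z,z') := by
    intro z z'
    by_cases h : ∃ i, i ≤ j ∧ s(z,z') = s(x, ys i)
    · exact Or.inl h
    · exact Or.inr (recolor_other h)
  intro u v w huv huw hvw hnn heq
  by_cases hux : u = x
  · subst hux
    -- classify the two edges from u = x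
    have classify : ∀ z : V, B.Adj u z →
        (∃ i, i ≤ j ∧ z = ys i ∧
          recolor g u ys j d s(u, z) = if i < j then g s(u, ys (i+1)) else some d) ∨
        ((¬ ∃ i, i ≤ j ∧ z = ys i) ∧ recolor g u ys j d s(u, z) = g s(u, z)) := by
      intro z _
      by_cases h : ∃ i, i ≤ j ∧ z = ys i
      · obtain ⟨i, hi, rfl⟩ := h
        exact Or.inl ⟨i, hi, rfl, recolor_fan hadj hinj hj hi⟩
      · refine Or.inr ⟨h, recolor_other ?_⟩
        rintro ⟨i, hi, heq'⟩
        rw [Sym2.eq_iff] at heq'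
        rcases heq' with ⟨-, h2⟩ | ⟨h1, -⟩
        · exact h ⟨i, hi, h2⟩
        · exact hxys i (le_trans hi hj) h1
    rcases classify v huv with ⟨iv, hiv, rfl, hv1⟩ | ⟨hv0, hv1⟩ <;>
      rcases classify w huw with ⟨iw, hiw, hweq, hw1⟩ | ⟨hw0, hw1⟩
    · -- both fan edges
      subst hweq
      rw [hv1, hw1] at heq
      have hivw : iv ≠ iw := fun h => hvw (by rw [h])
      by_cases h1 : iv < j <;> by_cases h2 : iw < j <;>
        simp only [if_pos, if_neg, h1, h2, if_true, if_false] at heq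
      · obtain ⟨cv, hcv, -⟩ := hcol iv (lt_of_lt_of_le h1 hj)
        refine hf (hadj (iv+1) ?_) (hadj (iw+1) ?_) ?_ ?_ heq
        · omega
        · omega
        · intro hcon
          have := hinj (iv+1) (by omega) (iw+1) (by omega) hcon
          omega
        · simp [hcv]
      · obtain ⟨cv, hcv, -⟩ := hcol iv (lt_of_lt_of_le h1 hj)
        exact hdx (ys (iv+1)) (hadj (iv+1) (by omega)) heq
      · exact hdx (ys (iw+1)) (hadj (iw+1) (by omega)) heq.symm
      · exact hivw (by omega)
    · -- v fan, w not
      rw [hv1, hw1] at heq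
      by_cases h1 : iv < j <;> simp only [if_pos, if_neg, h1, if_true, if_false] at heq
      · obtain ⟨cv, hcv, -⟩ := hcol iv (lt_of_lt_of_le h1 hj)
        refine hf (hadj (iv+1) (by omega)) huw ?_ (by simp [hcv]) heq
        intro hcon
        exact hw0 ⟨iv+1, by omega, hcon.symm⟩
      · exact hdx w huw heq.symm
    · -- w fan, v not
      subst hweq
      rw [hv1, hw1] at heq
      by_cases h2 : iw < j <;> simp only [if_pos, if_neg, h2, if_true, if_false] at heq
      · obtain ⟨cw, hcw, -⟩ := hcol iw (lt_of_lt_of_le h2 hj)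
        refine (hf (hadj (iw+1) (by omega)) huv ?_ (by simp [hcw]) heq.symm).elim
        intro hcon
        exact hv0 ⟨iw+1, by omega, hcon.symm⟩
      · exact hdx v huv heq
    · rw [hv1, hw1] at heq
      rw [hv1] at hnn
      exact hf huv huw hvw hnn heq
  · -- u ≠ x : only the possible edge to x is changed
    have hstep : ∀ z : V, z ≠ x → recolor g x ys j d s(u, z) = g s(u, z) := by
      intro z hz
      apply recolor_other
      rintro ⟨i, hi, heq'⟩
      rw [Sym2.eq_iff] at heq'
      rcases heq' with ⟨h1, -⟩ | ⟨-, h2⟩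
      · exact hux h1
      · exact hz h2
    by_cases huy : ∃ t, t ≤ j ∧ u = ys t
    · obtain ⟨t, ht, rfl⟩ := huy
      by_cases hvx : v = x
      · have hwx : w ≠ x := fun h => hvw (hvx.trans h.symm)
        have hv1 : recolor g x ys j d s(ys t, v) =
            if t < j then g s(x, ys (t+1)) else some d := by
          rw [hvx, Sym2.eq_swap]
          exact recolor_fan hadj hinj hj ht
        rw [hv1, hstep w hwx] at heq
        by_cases h1 : t < j
        · rw [if_pos h1] at heq
          obtain ⟨ct, hct, hfree⟩ := hcol t (lt_of_lt_of_le h1 hj)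
          rw [hct] at heq
          exact hfree w huw heq.symm
        · rw [if_neg h1] at heq
          have htj : t = j := le_antisymm ht (not_lt.1 h1)
          exact hdy w (htj ▸ huw) (htj ▸ heq.symm)
      · by_cases hwx : w = x
        · have hw1 : recolor g x ys j d s(ys t, w) =
              if t < j then g s(x, ys (t+1)) else some d := by
            rw [hwx, Sym2.eq_swap]
            exact recolor_fan hadj hinj hj ht
          rw [hw1, hstep v hvx] at heq
          by_cases h1 : t < j
          · rw [if_pos h1] at heq
            obtain ⟨ct, hct, hfree⟩ := hcol t (lt_of_lt_of_le h1 hj)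
            rw [hct] at heq
            exact hfree v huv heq
          · rw [if_neg h1] at heq
            have htj : t = j := le_antisymm ht (not_lt.1 h1)
            exact hdy v (htj ▸ huv) (htj ▸ heq)
        · rw [hstep v hvx, hstep w hwx] at heq
          rw [hstep v hvx] at hnn
          exact hf huv huw hvw hnn heq
    · have hall : ∀ z : V, recolor g x ys j d s(u, z) = g s(u, z) := by
        intro z
        apply recolor_other
        rintro ⟨i, hi, heq'⟩
        rw [Sym2.eq_iff] at heq'
        rcases heq' with ⟨h1, -⟩ | ⟨h1, -⟩
        · exact hux h1
        · exact huy ⟨i, hi, h1⟩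
      rw [hall v, hall w] at heq
      rw [hall v] at hnn
      exact hf huv huw hvw hnn heq

end RecolorLemmas

end Recolor

section Driver

variable {f : PEC V N} {x y : V}

variable (B) in
def IsFan (f : PEC V N) (x y : V) (m : ℕ) (ys : ℕ → V) : Prop :=
  ys 0 = y ∧ (∀ i ≤ m, B.Adj x (ys i)) ∧
  (∀ i ≤ m, ∀ i' ≤ m, ys i = ys i' → i = i') ∧
  f s(x, y) = none ∧
  (∀ i < m, ∃ cc, f s(x, ys (i+1)) = some cc ∧ Free B f (ys i) cc)

lemma extend_coloring
    (hdeg : ∀ v : V, ∃ cs : Finset V, (∀ w, B.Adj v w → w ∈ cs) ∧ cs.card < N)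
    (hf : Proper B f) (hxy : B.Adj x y) (hnone : f s(x,y) = none) :
    ∃ f' : PEC V N, Proper B f' ∧ (∀ e, f e ≠ none → f' e ≠ none) ∧
      f' s(x,y) ≠ none := by
  classical
  set FL : Set ℕ := {m | ∃ ys, IsFan B f x y m ys} with hFL
  have hne : 0 ∈ FL := by
    refine ⟨fun _ => y, rfl, ?_, ?_, hnone, by omega⟩
    · intro i hi
      interval_cases i
      exact hxy
    · intro i hi i' hi'
      omega
  have hbdd : BddAbove FL := by
    refine ⟨Fintype.card V, ?_⟩
    rintro m ⟨ys, -, hadj, hinj, -, -⟩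
    have : (Finset.range (m+1)).card ≤ (Finset.univ : Finset V).card := by
      apply Finset.card_le_card_of_injOn ys (fun i _ => Finset.mem_univ _)
      intro i hi i' hi' hii
      simp only [Finset.mem_coe, Finset.mem_range] at hi hi'
      exact hinj i (by omega) i' (by omega) hii
    have h2 : m + 1 ≤ Fintype.card V := by simpa using this
    omega
  set M := sSup FL with hM
  obtain ⟨ys, hy0, hadj, hinj, -, hcol⟩ := Nat.sSup_mem ⟨0, hne⟩ hbdd
  have hmax : M + 1 ∉ FL := fun h => by
    have := le_csSup hbdd h
    omega
  -- free colors
  obtain ⟨cs, hcs1, hcs2⟩ := hdeg x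
  obtain ⟨c, hc⟩ := exists_free f hcs1 hcs2
  obtain ⟨cs', hcs1', hcs2'⟩ := hdeg (ys M)
  obtain ⟨d, hd⟩ := exists_free f hcs1' hcs2'
  have hzero : s(x, ys 0) = s(x, y) := by rw [hy0]
  by_cases hdx : Free B f x d
  · -- no flip needed
    refine ⟨recolor f x ys M d, recolor_proper hadj hinj le_rfl hcol hf hdx hd, ?_, ?_⟩
    · exact fun e he => recolor_some hadj hinj le_rfl hcol e he
    · rw [← hzero]
      exact recolor_zero hadj hinj le_rfl hcol
  · -- d occurs at x on some fan edge ys t, 1 ≤ t < M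
    have : ∃ z, B.Adj x z ∧ f s(x,z) = some d := by
      by_contra hcon
      push_neg at hcon
      exact hdx (fun w hw => hcon w hw)
    obtain ⟨z, hza, hzc⟩ := this
    have hcd : c ≠ d := by
      intro h
      exact (h ▸ hc) z hza hzc
    have hzfan : ∃ t, t ≤ M ∧ z = ys t := by
      by_contra hzf
      push_neg at hzf
      apply hmax
      refine ⟨fun i => if i ≤ M then ys i else z, by simp [hy0], ?_, ?_, hnone, ?_⟩
      · intro i hi
        by_cases h : i ≤ M <;> simp only [h, if_true, if_false]
        · exact hadj i h
        · exact hza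
      · intro i hi i' hi'
        by_cases h : i ≤ M <;> by_cases h' : i' ≤ M <;>
          simp only [h, h', if_true, if_false]
        · exact hinj i h i' h'
        · intro he
          exact absurd he.symm (hzf i h)
        · intro he
          exact absurd he (hzf i' h')
        · omega
      · intro i hi
        by_cases h : i + 1 ≤ M
        · have h' : i ≤ M := by omega
          simp only [h, h', if_true]
          exact hcol i (by omega)
        · have hiM : i = M := by omega
          have h' : i ≤ M := by omega
          simp only [h, h', if_true, if_false]
          exact ⟨d, hzc, hiM ▸ hd⟩
    obtain ⟨t, htM, rfl⟩ := hzfan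
    have ht1 : 1 ≤ t := by
      rcases Nat.eq_zero_or_pos t with rfl | h
      · rw [hzero, hnone] at hzc
        exact absurd hzc (by simp)
      · exact h
    have htMne : t ≠ M := by
      intro h
      apply hd x (hadj M le_rfl).symm
      rw [Sym2.eq_swap, ← h]
      exact hzc
    have hxys : ∀ i ≤ M, x ≠ ys i := by
      intro i hi heq
      exact B.loopless.irrefl x (by nth_rewrite 2 [heq]; exact hadj i hi)
    have hfree_t1 : Free B f (ys (t-1)) d := by
      obtain ⟨cc, hcc, hfr⟩ := hcol (t-1) (by omega)
      have h1 : t - 1 + 1 = t := by omega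
      rw [h1] at hcc
      have : cc = d := Option.some_inj.mp (hcc.symm.trans hzc)
      rwa [this] at hfr
    have hx_deg1 := kempe_degLE1_of_free_a (a := c) (b := d) hf hc
    have ht1_deg1 := kempe_degLE1_of_free_b (a := c) (b := d) hf hfree_t1
    have hM_deg1 := kempe_degLE1_of_free_b (a := c) (b := d) hf hd
    have hprop₁ : Proper B (kflip B f c d x) := flip_proper hcd hf
    have hdx₁ : Free B (kflip B f c d x) x d :=
      free_flip_swap' hcd (SimpleGraph.Reachable.refl x) hc
    have hsome₁ : ∀ e, f e ≠ none → kflip B f c d x e ≠ none :=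
      fun e he h1 => he (flip_none_iff.mp h1)
    have hcol_ne : ∀ i, i < M → i + 1 ≠ t →
        ∃ cc, kflip B f c d x s(x, ys (i+1)) = some cc ∧
          Free B (kflip B f c d x) (ys i) cc := by
      intro i hi hit
      obtain ⟨cc, hcc, hfr⟩ := hcol i hi
      have hccc : cc ≠ c := by
        intro h
        exact hc (ys (i+1)) (hadj (i+1) (by omega)) (h ▸ hcc)
      have hccd : cc ≠ d := by
        intro h
        refine hf (hadj (i+1) (by omega)) hza ?_ (by simp [hcc]) ?_
        · intro hcon
          exact hit (hinj (i+1) (by omega) t htM hcon)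
        · rw [hcc, hzc, h]
      refine ⟨cc, ?_, ?_⟩
      · rw [flip_of_ne_colors (by rw [hcc]; simp [hccc]) (by rw [hcc]; simp [hccd])]
        exact hcc
      · exact free_flip_of_ne hccc hccd hfr
    by_cases hreach : (kempeGraph B f c d).Reachable x (ys (t-1))
    · have hreachM : ¬ (kempeGraph B f c d).Reachable x (ys M) := by
        intro hrM
        exact three_endpoints (kempe_degLE2 hf) (hxys (t-1) (by omega)) (hxys M le_rfl)
          (fun h => absurd (hinj (t-1) (by omega) M le_rfl h) (by omega))
          hx_deg1 ht1_deg1 hM_deg1 hreach hrM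
      have hcol₁ : ∀ i < M, ∃ cc, kflip B f c d x s(x, ys (i+1)) = some cc ∧
          Free B (kflip B f c d x) (ys i) cc := by
        intro i hi
        by_cases hit : i + 1 = t
        · refine ⟨c, ?_, ?_⟩
          · rw [hit]
            exact flip_of_reach_b hza hcd (SimpleGraph.Reachable.refl x) hzc
          · have hit1 : i = t - 1 := by omega
            rw [hit1]
            exact free_flip_swap hcd hreach hfree_t1
        · exact hcol_ne i hi hit
      have hdy₁ : Free B (kflip B f c d x) (ys M) d := free_flip_of_not_reach hreachM hd
      refine ⟨recolor (kflip B f c d x) x ys M d,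
        recolor_proper hadj hinj le_rfl hcol₁ hprop₁ hdx₁ hdy₁,
        fun e he => recolor_some hadj hinj le_rfl hcol₁ e (hsome₁ e he), ?_⟩
      rw [← hzero]
      exact recolor_zero hadj hinj le_rfl hcol₁
    · have hadj' : ∀ i ≤ t-1, B.Adj x (ys i) := fun i hi => hadj i (by omega)
      have hinj' : ∀ i ≤ t-1, ∀ i' ≤ t-1, ys i = ys i' → i = i' :=
        fun i hi i' hi' h => hinj i (by omega) i' (by omega) h
      have hcol₁ : ∀ i < t-1, ∃ cc, kflip B f c d x s(x,ys (i+1)) = some cc ∧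
          Free B (kflip B f c d x) (ys i) cc :=
        fun i hi => hcol_ne i (by omega) (by omega)
      have hdy₁ : Free B (kflip B f c d x) (ys (t-1)) d :=
        free_flip_of_not_reach hreach hfree_t1
      refine ⟨recolor (kflip B f c d x) x ys (t-1) d,
        recolor_proper hadj' hinj' le_rfl hcol₁ hprop₁ hdx₁ hdy₁,
        fun e he => recolor_some hadj' hinj' le_rfl hcol₁ e (hsome₁ e he), ?_⟩
      rw [← hzero]
      exact recolor_zero hadj' hinj' le_rfl hcol₁

end Driver

theorem vizing_exists
    (hdeg : ∀ v : V, ∃ cs : Finset V, (∀ w, B.Adj v w → w ∈ cs) ∧ cs.card < N) :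
    ∃ f : PEC V N, Proper B f ∧ ∀ u v, B.Adj u v → f s(u,v) ≠ none := by
  classical
  have hconc : ∀ f : PEC V N, Proper B f →
      (B.edgeFinset.filter (fun e => f e = none)) = ∅ →
      ∃ f : PEC V N, Proper B f ∧ ∀ u v, B.Adj u v → f s(u,v) ≠ none := by
    intro f hf hemp
    refine ⟨f, hf, fun u v huv hn => ?_⟩
    have : s(u,v) ∈ B.edgeFinset.filter (fun e => f e = none) := by
      simp [SimpleGraph.mem_edgeFinset, huv, hn]
    rw [hemp] at this
    exact absurd this (Finset.notMem_empty _)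
  suffices h : ∀ n (f : PEC V N), Proper B f →
      (B.edgeFinset.filter (fun e => f e = none)).card ≤ n →
      ∃ f : PEC V N, Proper B f ∧ ∀ u v, B.Adj u v → f s(u,v) ≠ none by
    refine h (B.edgeFinset.filter (fun e => (fun _ => none : PEC V N) e = none)).card
      (fun _ => none) ?_ le_rfl
    intro u v w _ _ _ hnn
    exact absurd rfl hnn
  intro n
  induction n with
  | zero =>
    intro f hf hcard
    exact hconc f hf (Finset.card_eq_zero.mp (Nat.le_zero.mp hcard))
  | succ n ih =>
    intro f hf hcard
    rcases Finset.eq_empty_or_nonempty (B.edgeFinset.filter (fun e => f e = none)) with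
      hemp | ⟨e, he⟩
    · exact hconc f hf hemp
    · rw [Finset.mem_filter, SimpleGraph.mem_edgeFinset] at he
      obtain ⟨hee, hen⟩ := he
      induction e with
      | _ u v =>
        have huv : B.Adj u v := hee
        obtain ⟨f', hf', hsome, hcolored⟩ := extend_coloring hdeg hf huv hen
        apply ih f' hf'
        have hss : B.edgeFinset.filter (fun e => f' e = none) ⊂
            B.edgeFinset.filter (fun e => f e = none) := by
          constructor
          · intro e' he'
            rw [Finset.mem_filter] at he' ⊢
            refine ⟨he'.1, ?_⟩
            by_contra hcon
            exact hsome e' hcon he'.2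
          · intro hsub
            have : s(u,v) ∈ B.edgeFinset.filter (fun e => f' e = none) := by
              apply hsub
              simp [SimpleGraph.mem_edgeFinset, huv, hen]
            rw [Finset.mem_filter] at this
            exact hcolored this.2
        have := Finset.card_lt_card hss
        omega

end Vizing

section Cayley

variable {H : Type*} [Group H] [Fintype H] [DecidableEq H] {S : Finset H}

instance cayleyGraphDecidable : DecidableRel (cayleyGraph S).Adj := fun g h =>
  decidable_of_iff (g ≠ h ∧ (g⁻¹ * h ∈ S ∨ h⁻¹ * g ∈ S))
    (by rw [cayleyGraph, SimpleGraph.fromRel_adj])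

variable (hS1 : (1:H) ∉ S) (hSsymm : ∀ s ∈ S, s⁻¹ ∈ S)

include hS1 hSsymm in
lemma cayley_adj {g h : H} :
    (cayleyGraph S).Adj g h ↔ g⁻¹ * h ∈ S := by
  unfold cayleyGraph
  rw [SimpleGraph.fromRel_adj]
  constructor
  · rintro ⟨hne, h1 | h1⟩
    · exact h1
    · have := hSsymm _ h1
      rwa [mul_inv_rev, inv_inv] at this
  · intro hmem
    refine ⟨?_, Or.inl hmem⟩
    rintro rfl
    rw [inv_mul_cancel] at hmem
    exact hS1 hmem

include hS1 hSsymm in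
lemma cayley_adj_translate {g u v : H} :
    (cayleyGraph S).Adj (g * u) (g * v) ↔ (cayleyGraph S).Adj u v := by
  rw [cayley_adj hS1 hSsymm, cayley_adj hS1 hSsymm, mul_inv_rev, mul_assoc,
    ← mul_assoc g⁻¹, inv_mul_cancel, one_mul]

include hS1 hSsymm in
lemma cayley_nbr {v w : H} (h : (cayleyGraph S).Adj v w) :
    w ∈ S.image (v * ·) := by
  rw [cayley_adj hS1 hSsymm] at h
  exact Finset.mem_image.2 ⟨v⁻¹ * w, h, by group⟩

variable {k : ℕ} {c0 : H → Fin k} {K : Finset H}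

include hS1 hSsymm in
lemma translate_clique (hK : (cayleyGraph S).IsNClique k K) (g : H) :
    (cayleyGraph S).IsNClique k (K.image (g * ·)) := by
  constructor
  · intro u hu v hv hne
    simp only [Finset.coe_image, Set.mem_image, Finset.mem_coe] at hu hv
    obtain ⟨u₀, hu₀, rfl⟩ := hu
    obtain ⟨v₀, hv₀, rfl⟩ := hv
    rw [cayley_adj_translate hS1 hSsymm]
    exact hK.isClique hu₀ hv₀ (fun h => hne (by rw [h]))
  · rw [Finset.card_image_of_injective _ (mul_right_injective g)]
    exact hK.card_eq

include hS1 hSsymm in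
lemma rainbow (hc0 : ∀ u v, (cayleyGraph S).Adj u v → c0 u ≠ c0 v)
    (hK : (cayleyGraph S).IsNClique k K) (g : H) (j : Fin k) :
    ∃! w, w ∈ K.image (g * ·) ∧ c0 w = j := by
  have hcl := translate_clique hS1 hSsymm hK g
  have hinj : ∀ u ∈ K.image (g * ·), ∀ v ∈ K.image (g * ·), c0 u = c0 v → u = v := by
    intro u hu v hv hcc
    by_contra hne
    exact hc0 u v (hcl.isClique hu hv hne) hcc
  have hsurj := Finset.surj_on_of_inj_on_of_card_le
    (s := K.image (g * ·)) (t := (Finset.univ : Finset (Fin k)))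
    (fun w _ => c0 w) (fun a ha => Finset.mem_univ _)
    (fun a₁ a₂ ha₁ ha₂ h => hinj a₁ ha₁ a₂ ha₂ h)
    (by rw [hcl.card_eq]; simp)
  obtain ⟨w, hw, hwj⟩ := hsurj j (Finset.mem_univ j)
  exact ⟨w, ⟨hw, hwj.symm⟩, fun y ⟨hy, hyj⟩ => hinj y hy w hw (by rw [hyj, hwj])⟩

include hS1 hSsymm in
lemma hall_condition (hc0 : ∀ u v, (cayleyGraph S).Adj u v → c0 u ≠ c0 v)
    (hK : (cayleyGraph S).IsNClique k K) (hk : 1 ≤ k) {a b : Fin k} (hab : a ≠ b)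
    (X : Finset {v : H // c0 v = a}) :
    X.card ≤ (X.biUnion (fun v => Finset.univ.filter
      (fun w => c0 w = b ∧ (cayleyGraph S).Adj v.1 w))).card := by
  classical
  have pick : ∀ (g : H) (j : Fin k), ∃! w, w ∈ K.image (g * ·) ∧ c0 w = j :=
    fun g j => rainbow hS1 hSsymm hc0 hK g j
  have hkey : (X ×ˢ K).card ≤ ((X.biUnion (fun v => Finset.univ.filter
      (fun w => c0 w = b ∧ (cayleyGraph S).Adj v.1 w))) ×ˢ K).card := by
    apply Finset.card_le_card_of_injOn (fun p =>
      ((pick (p.1.1 * p.2⁻¹) b).choose, (p.1.1 * p.2⁻¹)⁻¹ * (pick (p.1.1 * p.2⁻¹) b).choose))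
    · rintro ⟨v, u⟩ hp
      rw [Finset.mem_coe, Finset.mem_product] at hp
      obtain ⟨hvX, huK⟩ := hp
      obtain ⟨hwmem, hwcol⟩ := (pick (v.1 * u⁻¹) b).choose_spec.1
      have hvmem : v.1 ∈ K.image (fun x => (v.1 * u⁻¹) * x) :=
        Finset.mem_image.2 ⟨u, huK, by group⟩
      have hvne : v.1 ≠ (pick (v.1 * u⁻¹) b).choose := by
        intro h
        apply hab
        rw [← v.2, h, hwcol]
      have hadj := (translate_clique hS1 hSsymm hK (v.1 * u⁻¹)).isClique hvmem hwmem hvne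
      rw [Finset.mem_coe, Finset.mem_product]
      constructor
      · exact Finset.mem_biUnion.2
          ⟨v, hvX, Finset.mem_filter.2 ⟨Finset.mem_univ _, hwcol, hadj⟩⟩
      · obtain ⟨u₀, hu₀, hu₀e⟩ := Finset.mem_image.1 hwmem
        have heq2 : (v.1 * u⁻¹)⁻¹ * (pick (v.1 * u⁻¹) b).choose = u₀ := by
          rw [← hu₀e]; group
        show (v.1 * u⁻¹)⁻¹ * (pick (v.1 * u⁻¹) b).choose ∈ K
        rw [heq2]
        exact hu₀
    · rintro ⟨v, u⟩ hp ⟨v', u'⟩ hp' heq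
      rw [Finset.mem_coe, Finset.mem_product] at hp hp'
      simp only [Prod.mk.injEq] at heq
      obtain ⟨h1, h2⟩ := heq
      have hg : v.1 * u⁻¹ = v'.1 * u'⁻¹ := by
        rw [h1] at h2
        exact inv_injective (mul_right_cancel h2)
      have hvmem : v.1 ∈ K.image (fun x => (v.1 * u⁻¹) * x) :=
        Finset.mem_image.2 ⟨u, hp.2, by group⟩
      have hvmem' : v'.1 ∈ K.image (fun x => (v.1 * u⁻¹) * x) := by
        rw [hg]
        exact Finset.mem_image.2 ⟨u', hp'.2, by group⟩
      have hvv : v.1 = v'.1 := (pick (v.1 * u⁻¹) a).unique ⟨hvmem, v.2⟩ ⟨hvmem', v'.2⟩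
      have huu : u = u' := by
        rw [hvv] at hg
        exact inv_injective (mul_left_cancel hg)
      exact Prod.ext (Subtype.ext hvv) huu
  rw [Finset.card_product, Finset.card_product, hK.card_eq] at hkey
  exact Nat.le_of_mul_le_mul_right hkey hk

include hS1 hSsymm in
lemma hall_pair (hc0 : ∀ u v, (cayleyGraph S).Adj u v → c0 u ≠ c0 v)
    (hK : (cayleyGraph S).IsNClique k K) (hk : 1 ≤ k) {a b : Fin k} (hab : a ≠ b) :
    ∃ f : {v : H // c0 v = a} → H, Function.Injective f ∧
      ∀ v, c0 (f v) = b ∧ (cayleyGraph S).Adj v.1 (f v) := by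
  classical
  obtain ⟨f, hfinj, hft⟩ := (Finset.all_card_le_biUnion_card_iff_exists_injective
      (fun v : {v : H // c0 v = a} =>
        Finset.univ.filter (fun w => c0 w = b ∧ (cayleyGraph S).Adj v.1 w))).1
      (fun X => hall_condition hS1 hSsymm hc0 hK hk hab X)
  refine ⟨f, hfinj, fun v => ?_⟩
  have := hft v
  rw [Finset.mem_filter] at this
  exact this.2

include hS1 hSsymm in
lemma exists_partner (hc0 : ∀ u v, (cayleyGraph S).Adj u v → c0 u ≠ c0 v)
    (hK : (cayleyGraph S).IsNClique k K) (hk : 1 ≤ k) :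
    ∃ partner : H → Fin k → H,
      (∀ v, partner v (c0 v) = v) ∧
      ∀ v j, j ≠ c0 v → c0 (partner v j) = j ∧
        (cayleyGraph S).Adj v (partner v j) ∧ partner (partner v j) (c0 v) = v := by
  classical
  have hcard : ∀ a b : Fin k,
      Fintype.card {v : H // c0 v = a} = Fintype.card {v : H // c0 v = b} := by
    intro a b
    rcases eq_or_ne a b with rfl | hab
    · rfl
    · apply le_antisymm
      · obtain ⟨f, hfinj, hfp⟩ := hall_pair hS1 hSsymm hc0 hK hk hab
        exact Fintype.card_le_of_injective
          (fun v => (⟨f v, (hfp v).1⟩ : {v : H // c0 v = b}))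
          (fun x y hxy => hfinj (congrArg Subtype.val hxy))
      · obtain ⟨f, hfinj, hfp⟩ := hall_pair hS1 hSsymm hc0 hK hk hab.symm
        exact Fintype.card_le_of_injective
          (fun v => (⟨f v, (hfp v).1⟩ : {v : H // c0 v = a}))
          (fun x y hxy => hfinj (congrArg Subtype.val hxy))
  have hFG : ∀ a b : Fin k, a < b → ∃ FG : (H → H) × (H → H),
      (∀ v, c0 v = a → c0 (FG.1 v) = b ∧ (cayleyGraph S).Adj v (FG.1 v) ∧
        FG.2 (FG.1 v) = v) ∧
      (∀ w, c0 w = b → c0 (FG.2 w) = a ∧ (cayleyGraph S).Adj (FG.2 w) w ∧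
        FG.1 (FG.2 w) = w) := by
    intro a b hab
    obtain ⟨f, hfinj, hfp⟩ := hall_pair hS1 hSsymm hc0 hK hk hab.ne
    have hbij : Function.Bijective
        (fun v : {v : H // c0 v = a} => (⟨f v, (hfp v).1⟩ : {v : H // c0 v = b})) := by
      rw [Fintype.bijective_iff_injective_and_card]
      exact ⟨fun x y hxy => hfinj (congrArg Subtype.val hxy), hcard a b⟩
    set e := Equiv.ofBijective _ hbij with he
    refine ⟨(fun v => if h : c0 v = a then (e ⟨v, h⟩).1 else v,
             fun w => if h : c0 w = b then (e.symm ⟨w, h⟩).1 else w), ?_, ?_⟩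
    · intro v hv
      simp only [dif_pos hv]
      have hcol : c0 (e ⟨v, hv⟩).1 = b := (e ⟨v, hv⟩).2
      refine ⟨hcol, (hfp ⟨v, hv⟩).2, ?_⟩
      rw [dif_pos hcol]
      have h3 : (⟨(e ⟨v, hv⟩).1, hcol⟩ : {v : H // c0 v = b}) = e ⟨v, hv⟩ :=
        Subtype.ext rfl
      rw [h3, Equiv.symm_apply_apply]
    · intro w hw
      simp only [dif_pos hw]
      have hcol : c0 (e.symm ⟨w, hw⟩).1 = a := (e.symm ⟨w, hw⟩).2
      refine ⟨hcol, ?_, ?_⟩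
      · have h2 : (e (e.symm ⟨w, hw⟩)).1 = w := by rw [Equiv.apply_symm_apply]
        have h5 : f (e.symm ⟨w, hw⟩) = w := h2
        have h4 := (hfp (e.symm ⟨w, hw⟩)).2
        rwa [h5] at h4
      · rw [dif_pos hcol]
        have h3 : (⟨(e.symm ⟨w, hw⟩).1, hcol⟩ : {v : H // c0 v = a}) = e.symm ⟨w, hw⟩ :=
          Subtype.ext rfl
        rw [h3, Equiv.apply_symm_apply]
  choose FG hFG1 hFG2 using hFG
  set P : H → Fin k → H := fun v j =>
    if h : j = c0 v then v
    else if h' : c0 v < j then (FG (c0 v) j h').1 v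
    else (FG j (c0 v) ((not_lt.1 h').lt_of_ne h)).2 v with hP
  have hPv : ∀ v, P v (c0 v) = v := by
    intro v
    simp only [hP]
    simp
  have hPlt : ∀ v j (h' : c0 v < j), P v j = (FG (c0 v) j h').1 v := by
    intro v j h'
    simp only [hP]
    rw [dif_neg (fun h => absurd (h ▸ h') (lt_irrefl _)), dif_pos h']
  have hPgt : ∀ v j (h'' : j < c0 v), P v j = (FG j (c0 v) h'').2 v := by
    intro v j h''
    simp only [hP]
    rw [dif_neg (ne_of_lt h''), dif_neg (not_lt.2 (le_of_lt h''))]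
  refine ⟨P, hPv, ?_⟩
  intro v j hj
  rcases lt_or_gt_of_ne hj with h | h
  · obtain ⟨hcol, hadj, hinv⟩ := hFG2 j (c0 v) h v rfl
    rw [hPgt v j h]
    refine ⟨hcol, hadj.symm, ?_⟩
    rw [hPlt _ (c0 v) (by rw [hcol]; exact h)]
    simp only [hcol]
    exact hinv
  · obtain ⟨hcol, hadj, hinv⟩ := hFG1 (c0 v) j h v rfl
    rw [hPlt v j h]
    refine ⟨hcol, hadj, ?_⟩
    rw [hPgt _ (c0 v) (by rw [hcol]; exact h)]
    simp only [hcol]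
    exact hinv

lemma exists_clique_of_perfect (hperf : IsPerfectGraph (cayleyGraph S)) :
    ∃ K : Finset H,
      (cayleyGraph S).IsNClique ((cayleyGraph S).chromaticNumber.toNat) K := by
  classical
  set G := cayleyGraph S with hG
  have hcol : G.Colorable (Fintype.card H) := G.colorable_of_fintype
  have hne : G.chromaticNumber ≠ ⊤ := by
    have hle := hcol.chromaticNumber_le
    intro h
    rw [h] at hle
    rw [top_le_iff] at hle
    exact (WithTop.natCast_ne_top _) hle
  have hiso1 : (G.induce Set.univ).chromaticNumber = G.chromaticNumber :=
    le_antisymm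
      (SimpleGraph.chromaticNumber_mono_of_hom (G.induceUnivIso).toEmbedding.toHom)
      (SimpleGraph.chromaticNumber_mono_of_hom (G.induceUnivIso).symm.toEmbedding.toHom)
  have hperf' := hperf Set.univ
  have hkcast : ((G.induce Set.univ).cliqueNum : ℕ∞) = (G.chromaticNumber.toNat : ℕ∞) := by
    rw [← hperf', hiso1, ENat.coe_toNat hne]
  have hkn : (G.induce Set.univ).cliqueNum = G.chromaticNumber.toNat := by
    exact_mod_cast hkcast
  obtain ⟨s, hs⟩ := SimpleGraph.exists_isNClique_cliqueNum (G := G.induce Set.univ)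
  refine ⟨s.image Subtype.val, ?_, ?_⟩
  · intro u hu v hv huv
    simp only [Finset.coe_image, Set.mem_image, Finset.mem_coe] at hu hv
    obtain ⟨a, ha, rfl⟩ := hu
    obtain ⟨b, hb, rfl⟩ := hv
    have hab : a ≠ b := fun h => huv (by rw [h])
    have hadj := hs.isClique ha hb hab
    simpa using hadj
  · rw [Finset.card_image_of_injective _ Subtype.val_injective, hs.card_eq, hkn]

end Cayley

theorem perfect_cayley_tcc {H : Type*} [Group H] [Fintype H] [DecidableEq H]
    (S : Finset H)
    (hS1 : (1 : H) ∉ S) (hSsymm : ∀ s ∈ S, s⁻¹ ∈ S)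
    (hSgen : Subgroup.closure (S : Set H) = ⊤)
    (hperf : IsPerfectGraph (cayleyGraph S))
    (hodd : Odd (cayleyGraph S).chromaticNumber.toNat)
    (hdvd : (cayleyGraph S).chromaticNumber.toNat ∣ Fintype.card H) :
    totalChromaticNumber (cayleyGraph S) ≤ S.card + 2 := by
  classical
  set G := cayleyGraph S with hG
  set k := G.chromaticNumber.toNat with hk
  have hk1 : 1 ≤ k := by
    obtain ⟨m, hm⟩ := hodd
    omega
  obtain ⟨K, hK⟩ := exists_clique_of_perfect hperf
  rw [← hG, ← hk] at hK
  obtain ⟨c0⟩ : G.Colorable k := G.colorable_chromaticNumber_of_fintype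
  have hc0 : ∀ u v, G.Adj u v → c0 u ≠ c0 v := fun u v h => c0.valid h
  have hkS : k ≤ S.card + 1 := by
    obtain ⟨v, hv⟩ := Finset.card_pos.1 (by rw [hK.card_eq]; omega)
    have hsub : K.erase v ⊆ S.image (v * ·) := by
      intro w hw
      rw [Finset.mem_erase] at hw
      exact cayley_nbr hS1 hSsymm (hK.isClique hv hw.2 (Ne.symm hw.1))
    have hcards := Finset.card_le_card hsub
    rw [Finset.card_erase_of_mem hv, hK.card_eq] at hcards
    have himg : (S.image (v * ·)).card ≤ S.card := Finset.card_image_le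
    omega
  obtain ⟨partner, hp1, hp2⟩ := exists_partner hS1 hSsymm hc0 hK hk1
  have hPsymm2 : ∀ u v, partner u (c0 v) = v → partner v (c0 u) = u := by
    intro u v hpv
    by_cases hcc : c0 u = c0 v
    · have h3 : u = v := by rw [← hpv, ← hcc, hp1 u]
      subst h3
      exact hp1 u
    · have h4 := (hp2 u (c0 v) (Ne.symm hcc)).2.2
      rwa [hpv] at h4
  set Bgr : SimpleGraph H :=
    { Adj := fun u v => G.Adj u v ∧ partner u (c0 v) ≠ v,
      symm := by
        refine ⟨?_⟩
        rintro u v ⟨h1, h2⟩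
        exact ⟨h1.symm, fun hcon => h2 (hPsymm2 v u hcon)⟩,
      loopless := ⟨fun v h => G.loopless.irrefl v h.1⟩ } with hBgr
  set N := S.card + 2 - k with hN
  have hdeg : ∀ v : H, ∃ cs : Finset H, (∀ w, Bgr.Adj v w → w ∈ cs) ∧ cs.card < N := by
    intro v
    refine ⟨(S.image (v * ·)) \
      ((Finset.univ.filter (fun j : Fin k => j ≠ c0 v)).image (partner v)), ?_, ?_⟩
    · intro w hw
      rw [Finset.mem_sdiff]
      refine ⟨cayley_nbr hS1 hSsymm hw.1, ?_⟩
      intro hcon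
      rw [Finset.mem_image] at hcon
      obtain ⟨j, hj, hje⟩ := hcon
      rw [Finset.mem_filter] at hj
      have hcw : c0 w = j := by rw [← hje]; exact (hp2 v j hj.2).1
      exact hw.2 (by rw [hcw, hje])
    · have hsub : (Finset.univ.filter (fun j : Fin k => j ≠ c0 v)).image (partner v) ⊆
          S.image (v * ·) := by
        intro w hw
        rw [Finset.mem_image] at hw
        obtain ⟨j, hj, hje⟩ := hw
        rw [Finset.mem_filter] at hj
        exact cayley_nbr hS1 hSsymm (by rw [← hje]; exact (hp2 v j hj.2).2.1)
      rw [Finset.card_sdiff_of_subset hsub]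
      have h1 : ((Finset.univ.filter (fun j : Fin k => j ≠ c0 v)).image (partner v)).card
          = k - 1 := by
        rw [Finset.card_image_of_injOn]
        · rw [Finset.filter_ne', Finset.card_erase_of_mem (Finset.mem_univ _),
            Finset.card_univ, Fintype.card_fin]
        · intro a ha b hb hab
          rw [Finset.mem_coe, Finset.mem_filter] at ha hb
          rw [← (hp2 v a ha.2).1, ← (hp2 v b hb.2).1, hab]
      rw [h1, Finset.card_image_of_injective _ (mul_right_injective v)]
      omega
  obtain ⟨vc, hvcP, hvcT⟩ := vizing_exists hdeg
  haveI : NeZero k := ⟨by omega⟩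
  set inv2 : ZMod k := (((k+1)/2 : ℕ) : ZMod k) with hinv2
  have h2inv : (2 : ZMod k) * inv2 = 1 := by
    obtain ⟨m, hm⟩ := hodd
    have hnat : 2 * ((k+1)/2) = k + 1 := by omega
    calc (2 : ZMod k) * inv2 = ((2 * ((k+1)/2) : ℕ) : ZMod k) := by
          rw [hinv2]; push_cast; ring
    _ = ((k+1 : ℕ) : ZMod k) := by rw [hnat]
    _ = 1 := by push_cast [ZMod.natCast_self]; ring
  set lowc : Fin k → Fin k → ℕ :=
    fun a b => ((((a : ℕ) + (b : ℕ) : ℕ) : ZMod k) * inv2).val with hlowc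
  have hlowlt : ∀ a b, lowc a b < k := fun a b => ZMod.val_lt _
  have hlowdiag : ∀ a : Fin k, lowc a a = (a : ℕ) := by
    intro a
    simp only [hlowc]
    have hh : ((((a:ℕ) + (a:ℕ) : ℕ)) : ZMod k) * inv2
        = ((a:ℕ) : ZMod k) * ((2 : ZMod k) * inv2) := by push_cast; ring
    rw [hh, h2inv, mul_one, ZMod.val_cast_of_lt a.isLt]
  have hlowinj : ∀ a b b' : Fin k, lowc a b = lowc a b' → b = b' := by
    intro a b b' h
    have hval : ((((a:ℕ)+(b:ℕ):ℕ)) : ZMod k) * inv2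
        = ((((a:ℕ)+(b':ℕ):ℕ)) : ZMod k) * inv2 := ZMod.val_injective k h
    have hmul := congrArg (fun z : ZMod k => z * 2) hval
    have hsimp : ∀ x : ZMod k, (x * inv2) * 2 = x := by
      intro x
      calc (x * inv2) * 2 = x * ((2 : ZMod k) * inv2) := by ring
      _ = x := by rw [h2inv, mul_one]
    rw [hsimp, hsimp] at hmul
    have hb : ((b:ℕ) : ZMod k) = ((b':ℕ) : ZMod k) := by
      push_cast at hmul
      exact add_left_cancel hmul
    have hbv := congrArg ZMod.val hb
    rw [ZMod.val_cast_of_lt b.isLt, ZMod.val_cast_of_lt b'.isLt] at hbv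
    exact Fin.ext hbv
  set cV : H → Fin (S.card + 2) :=
    fun v => ⟨(c0 v : ℕ), by have := (c0 v).isLt; omega⟩ with hcV
  set F : H → H → Fin (S.card + 2) := fun u v =>
    if partner u (c0 v) = v then
      ⟨lowc (c0 u) (c0 v), by have := hlowlt (c0 u) (c0 v); omega⟩
    else match vc s(u,v) with
      | some jj => ⟨k + (jj : ℕ), by have := jj.isLt; omega⟩
      | none => ⟨0, by omega⟩
    with hF
  have hFsymm : ∀ u v, F u v = F v u := by
    intro u v
    by_cases hA : partner u (c0 v) = v
    · have hA' := hPsymm2 u v hA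
      simp only [hF]
      rw [if_pos hA, if_pos hA']
      apply Fin.ext
      simp only [hlowc]
      rw [Nat.add_comm]
    · have hA' : ¬ partner v (c0 u) = u := fun h => hA (hPsymm2 v u h)
      simp only [hF]
      rw [if_neg hA, if_neg hA', Sym2.eq_swap]
  set cE : G.edgeSet → Fin (S.card + 2) :=
    fun e => Sym2.lift ⟨F, hFsymm⟩ (e : Sym2 H) with hcE
  have hrep : ∀ (e : G.edgeSet) (x : H), x ∈ (e : Sym2 H) →
      ∃ p, (e : Sym2 H) = s(x, p) ∧ G.Adj x p := by
    intro e x hx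
    refine ⟨Sym2.Mem.other' hx, (Sym2.other_spec' hx).symm, ?_⟩
    have he := e.2
    rw [← Sym2.other_spec' hx] at he
    rwa [SimpleGraph.mem_edgeSet] at he
  have hBfacts : ∀ x p, G.Adj x p → ¬ partner x (c0 p) = p →
      ∃ jj : Fin N, vc s(x,p) = some jj ∧ F x p = ⟨k + (jj : ℕ), by
        have := jj.isLt; omega⟩ := by
    intro x p hadj hnA
    have hne := hvcT x p ⟨hadj, hnA⟩
    obtain ⟨jj, hjj⟩ := Option.ne_none_iff_exists'.1 hne
    refine ⟨jj, hjj, ?_⟩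
    simp only [hF]
    rw [if_neg hnA, hjj]
  have hAfacts : ∀ x p, partner x (c0 p) = p →
      F x p = ⟨lowc (c0 x) (c0 p), by have := hlowlt (c0 x) (c0 p); omega⟩ := by
    intro x p hA
    simp only [hF]
    rw [if_pos hA]
  refine Nat.sInf_le ⟨cV, cE, ?_, ?_, ?_⟩
  · intro u v hadj heq
    apply hc0 u v hadj
    apply Fin.ext
    simpa [hcV] using congrArg Fin.val heq
  · intro e f hef ⟨x, hxe, hxf⟩
    obtain ⟨p, hep, hadjp⟩ := hrep e x hxe
    obtain ⟨q, hfq, hadjq⟩ := hrep f x hxf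
    have hpq : p ≠ q := by
      intro h
      apply hef
      apply Subtype.ext
      rw [hep, hfq, h]
    have hcEe : cE e = F x p := by simp only [hcE]; rw [hep]; exact Sym2.lift_mk _ _ _
    have hcEf : cE f = F x q := by simp only [hcE]; rw [hfq]; exact Sym2.lift_mk _ _ _
    rw [hcEe, hcEf]
    by_cases hA1 : partner x (c0 p) = p <;> by_cases hA2 : partner x (c0 q) = q
    · rw [hAfacts x p hA1, hAfacts x q hA2]
      intro heq
      have hval : lowc (c0 x) (c0 p) = lowc (c0 x) (c0 q) := congrArg Fin.val heq
      have hcpq := hlowinj (c0 x) (c0 p) (c0 q) hval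
      apply hpq
      rw [← hA1, hcpq, hA2]
    · obtain ⟨jj, hjj, hFq⟩ := hBfacts x q hadjq hA2
      rw [hAfacts x p hA1, hFq]
      intro heq
      have hval := congrArg Fin.val heq
      simp only at hval
      have := hlowlt (c0 x) (c0 p)
      omega
    · obtain ⟨jj, hjj, hFp⟩ := hBfacts x p hadjp hA1
      rw [hAfacts x q hA2, hFp]
      intro heq
      have hval := congrArg Fin.val heq
      simp only at hval
      have := hlowlt (c0 x) (c0 q)
      omega
    · obtain ⟨jj1, hjj1, hFp⟩ := hBfacts x p hadjp hA1
      obtain ⟨jj2, hjj2, hFq⟩ := hBfacts x q hadjq hA2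
      rw [hFp, hFq]
      intro heq
      have hval := congrArg Fin.val heq
      simp only at hval
      have hjje : jj1 = jj2 := Fin.ext (by omega)
      apply hvcP ⟨hadjp, hA1⟩ ⟨hadjq, hA2⟩ hpq (by rw [hjj1]; simp)
      rw [hjj1, hjj2, hjje]
  · intro e v hv
    obtain ⟨p, hep, hadj⟩ := hrep e v hv
    have hcEe : cE e = F v p := by simp only [hcE]; rw [hep]; exact Sym2.lift_mk _ _ _
    rw [hcEe]
    by_cases hA : partner v (c0 p) = p
    · rw [hAfacts v p hA]
      intro heq
      have hval : lowc (c0 v) (c0 p) = (c0 v : ℕ) := congrArg Fin.val heq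
      rw [← hlowdiag (c0 v)] at hval
      exact hc0 v p hadj (hlowinj (c0 v) (c0 p) (c0 v) hval).symm
    · obtain ⟨jj, hjj, hFp⟩ := hBfacts v p hadj hA
      rw [hFp]
      intro heq
      have hval := congrArg Fin.val heq
      simp only [hcV] at hval
      have := (c0 v).isLt
      omega
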